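/- Define, for ρ ∈ [-1,1] with q = √(1-ρ²): K₁(ρ) = (q + ρ·arccos(-ρ))/(2π), K₂(ρ) = (3ρq + arccos(-ρ)(1+2ρ²))/(2π), K₃₁(ρ) = (q(2+ρ²) + 3ρ·arccos(-ρ))/(2π), and μ_r(ρ) = (1/2)·[ K₁(ρ)·(4K₂(ρ) + 18) − 8·K₃₁(ρ) ]. Then lim_{ρ → 1⁻} ( μ_r(ρ) + 2(1-ρ) ) / (1-ρ)^{3/2} = 4√2 / π. -/

import Mathlib

open Real Filter Set Topology

/-- Cho–Saul ReLU kernel `K₁(ρ) = (q + ρ arccos(-ρ))/(2π)`, `q = √(1-ρ²)`. -/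
noncomputable def K1 (ρ : ℝ) : ℝ :=
  (Real.sqrt (1 - ρ ^ 2) + ρ * Real.arccos (-ρ)) / (2 * π)

/-- Cho–Saul ReLU kernel `K₂(ρ) = (3ρq + arccos(-ρ)(1+2ρ²))/(2π)`. -/
noncomputable def K2 (ρ : ℝ) : ℝ :=
  (3 * ρ * Real.sqrt (1 - ρ ^ 2) + Real.arccos (-ρ) * (1 + 2 * ρ ^ 2)) / (2 * π)

/-- Mixed Cho–Saul ReLU kernel `K₃₁(ρ) = (q(2+ρ²) + 3ρ arccos(-ρ))/(2π)`. -/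
noncomputable def K31 (ρ : ℝ) : ℝ :=
  (Real.sqrt (1 - ρ ^ 2) * (2 + ρ ^ 2) + 3 * ρ * Real.arccos (-ρ)) / (2 * π)

/-- Expected drift `μ_r(ρ) = (1/2)[K₁(4K₂ + 18) − 8K₃₁]` of the correlation
Markov chain of a He-initialized unshaped ReLU MLP. -/
noncomputable def mur (ρ : ℝ) : ℝ :=
  (1 / 2) * (K1 ρ * (4 * K2 ρ + 18) - 8 * K31 ρ)

/-- `(μ_r(ρ) + 2(1-ρ))/(1-ρ)^{3/2} → 4√2/π` as `ρ → 1⁻`. -/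

lemma lim_sin_div : Tendsto (fun x : ℝ => Real.sin x / x) (𝓝[>] (0:ℝ)) (𝓝 1) := by
  have h := hasDerivAt_iff_tendsto_slope.mp (Real.hasDerivAt_sin 0)
  rw [Real.cos_zero] at h
  have h2 : Tendsto (fun x : ℝ => Real.sin x / x) (𝓝[≠] (0:ℝ)) (𝓝 1) := by
    refine h.congr fun x => ?_
    simp [slope, Real.sin_zero, div_eq_inv_mul]
  exact h2.mono_left (nhdsWithin_mono 0 (fun x hx => ne_of_gt hx))

lemma tendsto_half : Tendsto (fun b : ℝ => b / 2) (𝓝[>] (0:ℝ)) (𝓝[>] (0:ℝ)) := by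
  apply tendsto_nhdsWithin_of_tendsto_nhds_of_eventually_within
  · have : Tendsto (fun b : ℝ => b / 2) (𝓝 (0:ℝ)) (𝓝 (0/2)) :=
      (continuous_id.div_const 2).tendsto 0
    simpa using this.mono_left nhdsWithin_le_nhds
  · filter_upwards [self_mem_nhdsWithin] with x hx
    exact mem_Ioi.mpr (div_pos (mem_Ioi.mp hx) two_pos)

lemma one_sub_cos (b : ℝ) : 1 - Real.cos b = 2 * Real.sin (b/2) ^ 2 := by
  have h := Real.cos_two_mul (b/2)
  rw [show 2 * (b/2) = b by ring] at h
  nlinarith [Real.sin_sq_add_cos_sq (b/2)]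

lemma lim_one_sub_cos : Tendsto (fun b : ℝ => (1 - Real.cos b) / b ^ 2) (𝓝[>] (0:ℝ)) (𝓝 (1/2)) := by
  have key : Tendsto (fun b : ℝ => (1/2) * (Real.sin (b/2) / (b/2)) ^ 2) (𝓝[>] (0:ℝ)) (𝓝 (1/2)) := by
    have := ((lim_sin_div.comp tendsto_half).pow 2).const_mul (1/2 : ℝ)
    simpa using this
  refine key.congr' ?_
  filter_upwards [self_mem_nhdsWithin] with b (hb : 0 < b)
  have hb' : b ≠ 0 := ne_of_gt hb
  rw [one_sub_cos b]
  field_simp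


lemma lim_cube : Tendsto (fun b : ℝ => (Real.sin b - b) / b ^ 3) (𝓝[>] (0:ℝ)) (𝓝 (-(1/6))) := by
  apply HasDerivAt.lhopital_zero_nhdsGT
    (f' := fun x => Real.cos x - 1) (g' := fun x => 3 * x ^ 2)
  · filter_upwards with x
    exact (Real.hasDerivAt_sin x).sub (hasDerivAt_id x)
  · filter_upwards with x
    have := hasDerivAt_pow 3 x
    norm_num at this
    exact this
  · filter_upwards [self_mem_nhdsWithin] with x hx
    have : (0:ℝ) < x := hx
    positivity
  · have : Tendsto (fun x : ℝ => Real.sin x - x) (𝓝 (0:ℝ)) (𝓝 (Real.sin 0 - 0)) :=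
      (Real.continuous_sin.sub continuous_id).tendsto 0
    simpa using this.mono_left nhdsWithin_le_nhds
  · have : Tendsto (fun x : ℝ => x ^ 3) (𝓝 (0:ℝ)) (𝓝 ((0:ℝ) ^ 3)) :=
      (continuous_pow 3).tendsto 0
    simpa using this.mono_left nhdsWithin_le_nhds
  · have h := lim_one_sub_cos.const_mul (-(1/3) : ℝ)
    have h2 : Tendsto (fun b : ℝ => -(1/3) * ((1 - Real.cos b) / b ^ 2)) (𝓝[>] (0:ℝ))
        (𝓝 (-(1/6))) := by
      convert h using 2; norm_num
    refine h2.congr' ?_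
    filter_upwards [self_mem_nhdsWithin] with b (hb : 0 < b)
    have hb' : b ≠ 0 := ne_of_gt hb
    field_simp
    ring

lemma lim_cube' : Tendsto (fun b : ℝ => (Real.sin b - b * Real.cos b) / b ^ 3)
    (𝓝[>] (0:ℝ)) (𝓝 (1/3)) := by
  apply HasDerivAt.lhopital_zero_nhdsGT
    (f' := fun x => x * Real.sin x) (g' := fun x => 3 * x ^ 2)
  · filter_upwards with x
    have h1 := (Real.hasDerivAt_sin x).sub ((hasDerivAt_id x).mul (Real.hasDerivAt_cos x))
    refine h1.congr_deriv ?_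
    simp only [id_eq]
    ring
  · filter_upwards with x
    have := hasDerivAt_pow 3 x
    norm_num at this
    exact this
  · filter_upwards [self_mem_nhdsWithin] with x hx
    have : (0:ℝ) < x := hx
    positivity
  · have : Tendsto (fun x : ℝ => Real.sin x - x * Real.cos x) (𝓝 (0:ℝ))
        (𝓝 (Real.sin 0 - 0 * Real.cos 0)) :=
      (Real.continuous_sin.sub (continuous_id.mul Real.continuous_cos)).tendsto 0
    simpa using this.mono_left nhdsWithin_le_nhds
  · have : Tendsto (fun x : ℝ => x ^ 3) (𝓝 (0:ℝ)) (𝓝 ((0:ℝ) ^ 3)) :=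
      (continuous_pow 3).tendsto 0
    simpa using this.mono_left nhdsWithin_le_nhds
  · have h := lim_sin_div.const_mul (1/3 : ℝ)
    have h2 : Tendsto (fun b : ℝ => (1/3) * (Real.sin b / b)) (𝓝[>] (0:ℝ)) (𝓝 (1/3)) := by
      convert h using 2; norm_num
    refine h2.congr' ?_
    filter_upwards [self_mem_nhdsWithin] with b (hb : 0 < b)
    have hb' : b ≠ 0 := ne_of_gt hb
    field_simp

lemma lim_sqrt2 : Tendsto (fun b : ℝ => b / Real.sqrt (1 - Real.cos b)) (𝓝[>] (0:ℝ))
    (𝓝 (Real.sqrt 2)) := by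
  have hinv : Tendsto (fun b : ℝ => (b/2) / Real.sin (b/2)) (𝓝[>] (0:ℝ)) (𝓝 1) := by
    have h := (lim_sin_div.comp tendsto_half).inv₀ one_ne_zero
    norm_num at h
    refine h.congr' ?_
    filter_upwards [Ioo_mem_nhdsGT_of_mem (by constructor <;> [rfl; exact Real.pi_pos] :
      (0:ℝ) ∈ Ico 0 π)] with b hb
    have hs : 0 < Real.sin (b/2) :=
      Real.sin_pos_of_pos_of_lt_pi (by linarith [hb.1]) (by linarith [hb.2, Real.pi_pos])
    simp only [Function.comp]
  have h := hinv.const_mul (Real.sqrt 2)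
  rw [mul_one] at h
  refine h.congr' ?_
  filter_upwards [Ioo_mem_nhdsGT_of_mem (by constructor <;> [rfl; exact Real.pi_pos] :
    (0:ℝ) ∈ Ico 0 π)] with b hb
  have hs : 0 < Real.sin (b/2) :=
    Real.sin_pos_of_pos_of_lt_pi (by linarith [hb.1]) (by linarith [hb.2, Real.pi_pos])
  rw [one_sub_cos b, show (2:ℝ) * Real.sin (b/2)^2 = Real.sqrt 2^2 * Real.sin (b/2)^2 by
      rw [Real.sq_sqrt]; norm_num,
    ← mul_pow, Real.sqrt_sq (by positivity)]
  have hsq : Real.sqrt 2 ≠ 0 := by positivity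
  field_simp
  linear_combination b * Real.sq_sqrt (by norm_num : (0:ℝ) ≤ 2)





lemma tendsto_cos_zero : Tendsto (fun b : ℝ => Real.cos b) (𝓝[>] (0:ℝ)) (𝓝 1) := by
  have : Tendsto (fun b : ℝ => Real.cos b) (𝓝 (0:ℝ)) (𝓝 (Real.cos 0)) :=
    Real.continuous_cos.tendsto 0
  simpa using this.mono_left nhdsWithin_le_nhds

lemma tendsto_id_zero : Tendsto (fun b : ℝ => b) (𝓝[>] (0:ℝ)) (𝓝 0) :=
  tendsto_id.mono_left nhdsWithin_le_nhds

/-- `Lnum b / b³ → 8`. -/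
lemma lim_Lnum : Tendsto (fun b : ℝ =>
    (Real.sin b * (4 + 2 * Real.cos b ^ 2) + 2 * Real.cos b * (1 - 4 * Real.cos b ^ 2) * b) / b ^ 3)
    (𝓝[>] (0:ℝ)) (𝓝 8) := by
  have h : Tendsto (fun b : ℝ => 6 * ((Real.sin b - b * Real.cos b) / b ^ 3)
      - 2 * (Real.sin b / b) ^ 3 + 8 * Real.cos b * (Real.sin b / b) ^ 2)
      (𝓝[>] (0:ℝ)) (𝓝 (6 * (1/3) - 2 * 1 ^ 3 + 8 * 1 * 1 ^ 2)) := by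
    exact ((lim_cube'.const_mul 6).sub ((lim_sin_div.pow 3).const_mul 2)).add
      (((tendsto_cos_zero.const_mul 8).mul (lim_sin_div.pow 2)))
  norm_num at h
  refine h.congr' ?_
  filter_upwards [self_mem_nhdsWithin] with b (hb : 0 < b)
  have hb' : b ≠ 0 := ne_of_gt hb
  field_simp
  linear_combination (-2 * Real.sin b + 8 * b * Real.cos b) * Real.sin_sq_add_cos_sq b

/-- `T0 b / b³ → 0`. -/
lemma lim_T0 : Tendsto (fun b : ℝ =>
    (2 * (2 * Real.cos b - 1) * (1 - Real.cos b) ^ 2 * b ^ 2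
      + 2 * (5 * Real.cos b - 1) * (1 - Real.cos b) * b * (Real.sin b - b)
      + 6 * Real.cos b * (Real.sin b - b) ^ 2) / b ^ 3)
    (𝓝[>] (0:ℝ)) (𝓝 0) := by
  have h : Tendsto (fun b : ℝ =>
      2 * (2 * Real.cos b - 1) * ((1 - Real.cos b) / b ^ 2) ^ 2 * b ^ 3
      + 2 * (5 * Real.cos b - 1) * ((1 - Real.cos b) / b ^ 2) * ((Real.sin b - b) / b ^ 3) * b ^ 3
      + 6 * Real.cos b * ((Real.sin b - b) / b ^ 3) ^ 2 * b ^ 3)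
      (𝓝[>] (0:ℝ)) (𝓝 (2 * (2 * 1 - 1) * (1/2) ^ 2 * 0 ^ 3
        + 2 * (5 * 1 - 1) * (1/2) * (-(1/6)) * 0 ^ 3 + 6 * 1 * (-(1/6)) ^ 2 * 0 ^ 3)) := by
    refine Tendsto.add (Tendsto.add ?_ ?_) ?_
    · exact ((((tendsto_cos_zero.const_mul 2).sub tendsto_const_nhds).const_mul 2).mul
        (lim_one_sub_cos.pow 2)).mul (tendsto_id_zero.pow 3)
    · exact (((((tendsto_cos_zero.const_mul 5).sub tendsto_const_nhds).const_mul 2).mul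
        lim_one_sub_cos).mul lim_cube).mul (tendsto_id_zero.pow 3)
    · exact ((tendsto_cos_zero.const_mul 6).mul (lim_cube.pow 2)).mul (tendsto_id_zero.pow 3)
  norm_num at h
  refine h.congr' ?_
  filter_upwards [self_mem_nhdsWithin] with b (hb : 0 < b)
  have hb' : b ≠ 0 := ne_of_gt hb
  field_simp
lemma key_identity (s c b : ℝ) :
    (1/2) * ((s + c * (π - b)) / (2*π) * (4 * ((3*c*s + (π - b) * (1 + 2*c^2)) / (2*π)) + 18)
      - 8 * ((s * (2 + c^2) + 3*c*(π - b)) / (2*π))) + 2 * (1 - c)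
    = (4*π^2*(1 - c)^2*(2 + c)
       + π * (s * (4 + 2*c^2) + 2*c*(1 - 4*c^2)*b)
       + (2*(2*c - 1)*(1 - c)^2*b^2 + 2*(5*c - 1)*(1 - c)*b*(s - b) + 6*c*(s - b)^2))
      / (4*π^2) := by
  have hπ : (π:ℝ) ≠ 0 := Real.pi_ne_zero
  field_simp
  ring

lemma G_lim : Tendsto (fun b : ℝ =>
    (mur (Real.cos b) + 2 * (1 - Real.cos b)) / (1 - Real.cos b) ^ ((3:ℝ)/2))
    (𝓝[>] (0:ℝ)) (𝓝 (4 * Real.sqrt 2 / π)) := by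
  have hπ : (π:ℝ) ≠ 0 := Real.pi_ne_zero
  have hsqrt0 : Tendsto (fun b : ℝ => Real.sqrt (1 - Real.cos b)) (𝓝[>] (0:ℝ)) (𝓝 0) := by
    have : Tendsto (fun b : ℝ => Real.sqrt (1 - Real.cos b)) (𝓝 (0:ℝ))
        (𝓝 (Real.sqrt (1 - Real.cos 0))) :=
      (Real.continuous_sqrt.comp (continuous_const.sub Real.continuous_cos)).tendsto 0
    simpa using this.mono_left nhdsWithin_le_nhds
  have hcub : Tendsto (fun b : ℝ => (b / Real.sqrt (1 - Real.cos b)) ^ 3) (𝓝[>] (0:ℝ))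
      (𝓝 (Real.sqrt 2 ^ 3)) := lim_sqrt2.pow 3
  have Hlim : Tendsto (fun b : ℝ => (1/(4*π^2)) *
      (4*π^2*((2 + Real.cos b) * Real.sqrt (1 - Real.cos b))
        + π * ((Real.sin b * (4 + 2 * Real.cos b ^ 2)
            + 2 * Real.cos b * (1 - 4 * Real.cos b ^ 2) * b) / b ^ 3)
          * (b / Real.sqrt (1 - Real.cos b)) ^ 3
        + ((2 * (2 * Real.cos b - 1) * (1 - Real.cos b) ^ 2 * b ^ 2
            + 2 * (5 * Real.cos b - 1) * (1 - Real.cos b) * b * (Real.sin b - b)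
            + 6 * Real.cos b * (Real.sin b - b) ^ 2) / b ^ 3)
          * (b / Real.sqrt (1 - Real.cos b)) ^ 3))
      (𝓝[>] (0:ℝ))
      (𝓝 ((1/(4*π^2)) * (4*π^2*((2 + 1) * 0) + π * 8 * Real.sqrt 2 ^ 3
        + 0 * Real.sqrt 2 ^ 3))) := by
    refine Tendsto.const_mul _ (Tendsto.add (Tendsto.add ?_ ?_) ?_)
    · exact ((tendsto_const_nhds.add tendsto_cos_zero).mul hsqrt0).const_mul (4*π^2)
    · exact (lim_Lnum.const_mul π).mul hcub
    · exact lim_T0.mul hcub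
  have hval : (1/(4*π^2)) * (4*π^2*((2 + 1) * 0) + π * 8 * Real.sqrt 2 ^ 3
      + 0 * Real.sqrt 2 ^ 3) = 4 * Real.sqrt 2 / π := by
    have h3 : Real.sqrt 2 ^ 3 = 2 * Real.sqrt 2 := by
      rw [pow_succ, Real.sq_sqrt (by norm_num : (0:ℝ) ≤ 2)]
    rw [h3]
    field_simp
    ring
  rw [hval] at Hlim
  refine Hlim.congr' ?_
  filter_upwards [Ioo_mem_nhdsGT_of_mem
    (show (0:ℝ) ∈ Ico (0:ℝ) π from ⟨le_refl _, Real.pi_pos⟩)] with b hb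
  obtain ⟨hb0, hbπ⟩ := hb
  have hb' : b ≠ 0 := ne_of_gt hb0
  have hs : 0 < Real.sin b := Real.sin_pos_of_pos_of_lt_pi hb0 hbπ
  have hshalf : 0 < Real.sin (b/2) :=
    Real.sin_pos_of_pos_of_lt_pi (by linarith) (by linarith [Real.pi_pos])
  have hε : 0 < 1 - Real.cos b := by
    rw [one_sub_cos b]; positivity
  have hq : Real.sqrt (1 - Real.cos b ^ 2) = Real.sin b := by
    rw [← Real.sin_sq]; exact Real.sqrt_sq hs.le
  have ha : Real.arccos (-Real.cos b) = π - b := by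
    rw [Real.arccos_neg, Real.arccos_cos hb0.le hbπ.le]
  have hnum : mur (Real.cos b) + 2 * (1 - Real.cos b)
      = (4*π^2*(1 - Real.cos b)^2*(2 + Real.cos b)
       + π * (Real.sin b * (4 + 2*Real.cos b^2) + 2*Real.cos b*(1 - 4*Real.cos b^2)*b)
       + (2*(2*Real.cos b - 1)*(1 - Real.cos b)^2*b^2
          + 2*(5*Real.cos b - 1)*(1 - Real.cos b)*b*(Real.sin b - b)
          + 6*Real.cos b*(Real.sin b - b)^2)) / (4*π^2) := by
    unfold mur K1 K2 K31
    rw [hq, ha]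
    exact key_identity (Real.sin b) (Real.cos b) b
  have hrpow : (1 - Real.cos b) ^ ((3:ℝ)/2)
      = (1 - Real.cos b) * Real.sqrt (1 - Real.cos b) := by
    rw [show ((3:ℝ)/2) = 1 + 1/2 by norm_num, Real.rpow_add hε, Real.rpow_one,
      ← Real.sqrt_eq_rpow]
  rw [hnum, hrpow]
  have htpos : 0 < Real.sqrt (1 - Real.cos b) := Real.sqrt_pos.mpr hε
  set t := Real.sqrt (1 - Real.cos b) with ht
  have htt : t * t = 1 - Real.cos b := Real.mul_self_sqrt hε.le
  rw [← htt]
  have ht0 : t ≠ 0 := ne_of_gt htpos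
  field_simp

theorem mur_expansion_second_order :
    Tendsto (fun ρ : ℝ => (mur ρ + 2 * (1 - ρ)) / (1 - ρ) ^ ((3 : ℝ) / 2))
      (nhdsWithin 1 (Set.Iio 1))
      (nhds (4 * Real.sqrt 2 / π)) := by
  have harccos : Tendsto Real.arccos (𝓝[<] (1:ℝ)) (𝓝[>] (0:ℝ)) := by
    rw [tendsto_nhdsWithin_iff]
    constructor
    · have h : Tendsto Real.arccos (𝓝 (1:ℝ)) (𝓝 (Real.arccos 1)) :=
        Real.continuous_arccos.tendsto 1
      rw [Real.arccos_one] at h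
      exact h.mono_left nhdsWithin_le_nhds
    · filter_upwards [self_mem_nhdsWithin] with ρ (hρ : ρ < 1)
      exact mem_Ioi.mpr (Real.arccos_pos.mpr hρ)
  have h := G_lim.comp harccos
  refine h.congr' ?_
  filter_upwards [Ioo_mem_nhdsLT_of_mem
    (show (1:ℝ) ∈ Ioc (-1:ℝ) 1 from ⟨by norm_num, le_refl _⟩)] with ρ hρ
  simp only [Function.comp]
  rw [Real.cos_arccos hρ.1.le hρ.2.le]
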